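/- arXiv:0710.3637 — 2 statements merged into one kernel-verified Lean document; each statement's English description precedes it below -/
import Mathlib

section
/- (Lemma 5.1 and Remark 5.2) There exist constants d > 1 and b > 0 depending only on n such that the following holds. Let Ω ⊂ ℝⁿ be a bounded convex domain with B(0, n^{−3/2}) ⊂ Ω ⊂ B(0,1), and let u be a smooth strictly convex function on the closure of Ω with inf_Ω u = 0 attained at an interior point and u ≡ 1 on ∂Ω. Then, with f(ξ) := ⟨ξ, ∇u(ξ)⟩ − u(ξ), one has Σ_i (∂u/∂ξ_i)²(ξ) ≤ b (d + f(ξ))² for all ξ in the closure of Ω, and moreover |u(ξ) + f(ξ)| ≤ d + f(ξ) for all such ξ. -/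
noncomputable section

/-- The `i`-th partial derivative of a function on Euclidean `ℝⁿ`. -/
def pd {n : ℕ} (i : Fin n) (f : EuclideanSpace ℝ (Fin n) → ℝ) :
    EuclideanSpace ℝ (Fin n) → ℝ :=
  fun x => fderiv ℝ f x (EuclideanSpace.single i 1)

/-- The Hessian matrix `(∂²f/∂x_i∂x_j)`. -/
def hess {n : ℕ} (f : EuclideanSpace ℝ (Fin n) → ℝ) (x : EuclideanSpace ℝ (Fin n)) :
    Matrix (Fin n) (Fin n) ℝ :=
  Matrix.of fun i j => pd i (pd j f) x

/-- The Legendre transform function `f(ξ) = ⟨ξ, ∇u(ξ)⟩ − u(ξ)`. -/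
def legendreF {n : ℕ} (u : EuclideanSpace ℝ (Fin n) → ℝ)
    (ξ : EuclideanSpace ℝ (Fin n)) : ℝ :=
  (∑ i : Fin n, ξ i * pd i u ξ) - u ξ

section AuxLemmas

variable {n : ℕ}
local notation "E" => EuclideanSpace ℝ (Fin n)

lemma clm_sum (L : E →L[ℝ] ℝ) (w : E) :
    L w = ∑ i, w i * L (EuclideanSpace.single i 1) := by
  have h := (EuclideanSpace.basisFun (Fin n) ℝ).sum_repr w
  conv_lhs => rw [← h]
  rw [map_sum]
  simp [EuclideanSpace.basisFun_apply, EuclideanSpace.basisFun_repr, smul_eq_mul]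

lemma deriv2_line {u : E → ℝ} {Ω : Set E} (hΩ : IsOpen Ω)
    (hu : ContDiffOn ℝ (⊤ : ℕ∞) u (closure Ω))
    (hpd : ∀ ξ ∈ closure Ω, (hess u ξ).PosDef)
    (c w : E) (hw : w ≠ 0) {t₀ : ℝ} (ht₀ : c + t₀ • w ∈ Ω) :
    0 < deriv^[2] (fun t => u (c + t • w)) t₀ := by
  set γ : ℝ → E := fun t => c + t • w with hγdef
  have hγ : ∀ t : ℝ, HasDerivAt γ w t := by
    intro t
    have h1 : HasDerivAt (fun s : ℝ => s • w) ((1:ℝ) • w) t :=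
      (hasDerivAt_id t).smul_const w
    simpa [hγdef] using h1.const_add c
  have hγcont : Continuous γ := by fun_prop
  have hmem : ∀ x ∈ Ω, ContDiffAt ℝ ((⊤ : ℕ∞) : WithTop ℕ∞) u x := fun x hx =>
    hu.contDiffAt (Filter.mem_of_superset (hΩ.mem_nhds hx) subset_closure)
  set V : Set ℝ := γ ⁻¹' Ω with hVdef
  have hVopen : IsOpen V := hΩ.preimage hγcont
  have ht₀V : t₀ ∈ V := ht₀
  have hL : ∀ t ∈ V, HasDerivAt (fun s => u (γ s)) (fderiv ℝ u (γ t) w) t := by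
    intro t ht
    exact (((hmem _ ht).differentiableAt (by simp)).hasFDerivAt).comp_hasDerivAt t (hγ t)
  have hev : (deriv fun s => u (γ s)) =ᶠ[nhds t₀] fun t => fderiv ℝ u (γ t) w := by
    filter_upwards [hVopen.mem_nhds ht₀V] with t ht
    exact (hL t ht).deriv
  have h2 : deriv^[2] (fun t => u (γ t)) t₀ = deriv (deriv fun t => u (γ t)) t₀ := rfl
  rw [h2, hev.deriv_eq]
  set F : E → (E →L[ℝ] ℝ) := fderiv ℝ u with hFdef
  have hF : ContDiffAt ℝ 1 F (γ t₀) :=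
    (hmem _ ht₀).fderiv_right (by simpa using (WithTop.coe_le_coe.mpr (le_top : (1+1:ℕ∞) ≤ ⊤)))
  have hFdiff : DifferentiableAt ℝ F (γ t₀) := hF.differentiableAt one_ne_zero
  set B : E →L[ℝ] E →L[ℝ] ℝ := fderiv ℝ F (γ t₀) with hBdef
  have hFd : HasDerivAt (fun t => F (γ t)) (B w) t₀ :=
    hFdiff.hasFDerivAt.comp_hasDerivAt t₀ (hγ t₀)
  have happ : HasDerivAt (fun t => F (γ t) w) (B w w) t₀ := by
    have := hFd.clm_apply (hasDerivAt_const t₀ w)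
    simpa using this
  rw [happ.deriv]
  have hhess : ∀ i j, hess u (γ t₀) i j =
      B (EuclideanSpace.single i 1) (EuclideanSpace.single j 1) := by
    intro i j
    set A : (E →L[ℝ] ℝ) →L[ℝ] ℝ :=
      ContinuousLinearMap.apply ℝ ℝ (EuclideanSpace.single j 1) with hAdef
    have hA : HasFDerivAt (⇑A ∘ F) (A.comp B) (γ t₀) :=
      A.hasFDerivAt.comp _ hFdiff.hasFDerivAt
    have hres : fderiv ℝ (⇑A ∘ F) (γ t₀) (EuclideanSpace.single i 1) =
        B (EuclideanSpace.single i 1) (EuclideanSpace.single j 1) := by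
      rw [hA.fderiv]; rfl
    exact hres
  have key : B w w = ∑ i, w i * ∑ j, (hess u (γ t₀)) i j * w j := by
    rw [clm_sum (B w) w]
    have hrow : ∀ j : Fin n, B w (EuclideanSpace.single j 1) =
        ∑ i, w i * hess u (γ t₀) i j := by
      intro j
      have h := clm_sum (B.flip (EuclideanSpace.single j 1)) w
      simp only [ContinuousLinearMap.flip_apply] at h
      rw [h]
      exact Finset.sum_congr rfl fun i _ => by rw [hhess i j]
    simp only [hrow, Finset.mul_sum]
    rw [Finset.sum_comm]
    exact Finset.sum_congr rfl fun i _ => Finset.sum_congr rfl fun j _ => by ring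
  have hx : (w : Fin n → ℝ) ≠ 0 := fun h => hw (by simpa using congrArg (WithLp.toLp 2) h)
  have hp := (hpd _ (subset_closure ht₀)).dotProduct_mulVec_pos hx
  rw [key]
  simpa [dotProduct, Matrix.mulVec] using hp

lemma exit_time {Ω : Set E} (hΩ : IsOpen Ω)
    (hbdd : Ω ⊆ Metric.ball 0 1) {x : E} (hx : x ∈ Ω) {w : E} (hw : w ≠ 0) :
    ∃ T : ℝ, 0 < T ∧ x + T • w ∈ frontier Ω := by
  set A := {t : ℝ | 0 ≤ t ∧ x + t • w ∈ closure Ω} with hA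
  have hA0 : (0:ℝ) ∈ A := ⟨le_refl 0, by simpa using subset_closure hx⟩
  have hclosure_bdd : closure Ω ⊆ Metric.closedBall 0 1 :=
    closure_minimal (hbdd.trans Metric.ball_subset_closedBall) Metric.isClosed_closedBall
  have hwpos : 0 < ‖w‖ := norm_pos_iff.mpr hw
  have hbddA : BddAbove A := by
    refine ⟨(1 + ‖x‖)/‖w‖, fun t ht => ?_⟩
    have h1 : ‖x + t • w‖ ≤ 1 := by
      have := hclosure_bdd ht.2
      simpa [Metric.mem_closedBall, dist_zero_right] using this
    have h2 : ‖t • w‖ = t * ‖w‖ := by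
      rw [norm_smul, Real.norm_eq_abs, abs_of_nonneg ht.1]
    have h4 : ‖(x + t • w) - x‖ ≤ ‖x + t • w‖ + ‖x‖ := norm_sub_le _ _
    have h5 : (x + t • w) - x = t • w := by abel
    rw [le_div_iff₀ hwpos]
    rw [h5, h2] at h4
    linarith
  have hAne : A.Nonempty := ⟨0, hA0⟩
  have hcontγ : Continuous (fun t : ℝ => x + t • w) := by fun_prop
  have hAclosed : IsClosed A := by
    have h1 : IsClosed {t : ℝ | x + t • w ∈ closure Ω} :=
      IsClosed.preimage hcontγ isClosed_closure
    exact isClosed_Ici.inter h1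
  set T := sSup A with hTdef
  have hTA : T ∈ A := hAclosed.csSup_mem hAne hbddA
  have hnot : x + T • w ∉ Ω := by
    intro hmem
    have hnh : (fun t : ℝ => x + t • w) ⁻¹' Ω ∈ nhds T := (hΩ.preimage hcontγ).mem_nhds hmem
    obtain ⟨ε, hε, hsub⟩ := Metric.mem_nhds_iff.mp hnh
    have hT' : T + ε/2 ∈ A := by
      refine ⟨by linarith [hTA.1], subset_closure (hsub ?_)⟩
      simp only [Metric.mem_ball, Real.dist_eq]
      rw [abs_of_pos (by linarith)]
      · linarith
    have := le_csSup hbddA hT'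
    linarith
  have hfr : x + T • w ∈ frontier Ω := by
    rw [frontier, hΩ.interior_eq]
    exact ⟨hTA.2, hnot⟩
  have hTpos : 0 < T := by
    have hpre : (fun t : ℝ => x + t • w) ⁻¹' Ω ∈ nhds 0 :=
      (hΩ.preimage hcontγ).mem_nhds (by simpa using hx)
    obtain ⟨ε, hε, hsub⟩ := Metric.mem_nhds_iff.mp hpre
    have hε2 : ε/2 ∈ A := by
      refine ⟨by linarith, subset_closure (hsub ?_)⟩
      simp only [Metric.mem_ball, Real.dist_eq, sub_zero]
      rw [abs_of_pos (by linarith)]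
      linarith
    have := le_csSup hbddA hε2
    linarith
  exact ⟨T, hTpos, hfr⟩

lemma tangent_le {u : E → ℝ} {Ω : Set E} (hΩ : IsOpen Ω) (hconv : Convex ℝ Ω)
    (hu : ContDiffOn ℝ (⊤ : ℕ∞) u (closure Ω))
    (hpd : ∀ ξ ∈ closure Ω, (hess u ξ).PosDef)
    {x y : E} (hx : x ∈ closure Ω) (hy : y ∈ Ω)
    (hd : DifferentiableAt ℝ u x) :
    u x + fderiv ℝ u x (y - x) ≤ u y := by
  rcases eq_or_ne y x with rfl | hne
  · simp
  set w : E := y - x with hwdef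
  have hw : w ≠ 0 := sub_ne_zero.mpr hne
  set ψ : ℝ → ℝ := fun t => u (x + t • w) with hψdef
  have hmapsto : ∀ t ∈ Set.Icc (0:ℝ) 1, x + t • w ∈ closure Ω := fun t ht =>
    (hconv.closure).add_smul_sub_mem hx (subset_closure hy) ht
  have hcont : ContinuousOn ψ (Set.Icc 0 1) := by
    apply hu.continuousOn.comp (by fun_prop : Continuous fun t : ℝ => x + t • w).continuousOn
    intro t ht; exact hmapsto t ht
  have hconvψ : StrictConvexOn ℝ (Set.Icc (0:ℝ) 1) ψ := by
    apply strictConvexOn_of_deriv2_pos (convex_Icc 0 1) hcont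
    intro t ht
    rw [interior_Icc] at ht
    refine deriv2_line hΩ hu hpd x w hw ?_
    have hseg : x + t • w ∈ openSegment ℝ x y := by
      rw [openSegment_eq_image']
      exact ⟨t, ht, rfl⟩
    have h2 := hconv.openSegment_closure_interior_subset_interior hx
      (by rwa [hΩ.interior_eq] : y ∈ interior Ω) hseg
    rwa [hΩ.interior_eq] at h2
  have hγ0 : HasDerivAt (fun t : ℝ => x + t • w) w 0 := by
    have h1 : HasDerivAt (fun s : ℝ => s • w) ((1:ℝ) • w) 0 := (hasDerivAt_id 0).smul_const w
    simpa using h1.const_add x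
  have hder : HasDerivAt ψ (fderiv ℝ u x w) 0 := by
    refine HasFDerivAt.comp_hasDerivAt 0 ?_ hγ0
    rw [show x + (0:ℝ) • w = x by simp]
    exact hd.hasFDerivAt
  have hslope : Filter.Tendsto (slope ψ 0) (nhdsWithin 0 (Set.Ioi 0))
      (nhds (fderiv ℝ u x w)) :=
    (hasDerivAt_iff_tendsto_slope.mp hder).mono_left
      (nhdsWithin_mono 0 (fun t ht => Set.mem_compl_singleton_iff.mpr (ne_of_gt ht)))
  have hbound : ∀ᶠ t in nhdsWithin 0 (Set.Ioi 0), slope ψ 0 t ≤ ψ 1 - ψ 0 := by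
    filter_upwards [Ioo_mem_nhdsGT_of_mem (Set.left_mem_Ico.mpr one_pos)] with t ht
    have hψt := hconvψ.convexOn.2 (Set.left_mem_Icc.mpr zero_le_one)
      (Set.right_mem_Icc.mpr zero_le_one) (by linarith [ht.2] : (0:ℝ) ≤ 1 - t)
      (le_of_lt ht.1) (by ring)
    rw [show (1-t) • (0:ℝ) + t • 1 = t by simp] at hψt
    simp only [smul_eq_mul] at hψt
    rw [slope_def_field]
    rw [sub_zero, div_le_iff₀ ht.1]
    nlinarith
  have hkey : fderiv ℝ u x w ≤ ψ 1 - ψ 0 := le_of_tendsto hslope hbound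
  have hψ0 : ψ 0 = u x := by simp [hψdef]
  have hψ1 : ψ 1 = u y := by
    have hxy : x + (1:ℝ) • w = y := by rw [hwdef]; module
    simp only [hψdef, hxy]
  rw [hψ0, hψ1] at hkey
  linarith

lemma max_principle {u : E → ℝ} {Ω : Set E} (hn : 1 ≤ n) (hΩ : IsOpen Ω) (hconv : Convex ℝ Ω)
    (hbdd : Ω ⊆ Metric.ball 0 1)
    (hu : ContDiffOn ℝ (⊤ : ℕ∞) u (closure Ω))
    (hpd : ∀ ζ ∈ closure Ω, (hess u ζ).PosDef)
    (hbv : ∀ ζ ∈ frontier Ω, u ζ = 1)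
    {ξ : E} (hξ : ξ ∈ closure Ω) : u ξ ≤ 1 := by
  by_cases hmem : ξ ∈ Ω
  case neg =>
    have hfr : ξ ∈ frontier Ω := by rw [frontier, hΩ.interior_eq]; exact ⟨hξ, hmem⟩
    exact le_of_eq (hbv ξ hfr)
  set w : E := EuclideanSpace.single (⟨0, hn⟩ : Fin n) 1 with hwdef
  have hw : w ≠ 0 := by
    intro h
    have h1 : w (⟨0, hn⟩ : Fin n) = 0 := by rw [h]; rfl
    rw [hwdef, EuclideanSpace.single_apply] at h1
    simp at h1
  obtain ⟨T, hT, hfrT⟩ := exit_time hΩ hbdd hmem hw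
  obtain ⟨S, hS, hfrS⟩ := exit_time hΩ hbdd hmem (neg_ne_zero.mpr hw)
  set ψ : ℝ → ℝ := fun t => u (ξ + t • w) with hψdef
  have hptS : ξ + (-S) • w = ξ + S • (-w) := by module
  have hTS : (0:ℝ) < T + S := by linarith
  have hmapsto : ∀ t ∈ Set.Icc (-S) T, ξ + t • w ∈ closure Ω := by
    intro t ht
    rcases le_or_gt 0 t with h0 | h0
    · have h1 : ξ + t • w = ξ + (t/T) • ((ξ + T • w) - ξ) := by
        have : (t/T) • ((ξ + T • w) - ξ) = t • w := by
          rw [show (ξ + T • w) - ξ = T • w by abel, smul_smul, div_mul_cancel₀ _ (ne_of_gt hT)]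
        rw [this]
      rw [h1]
      exact (hconv.closure).add_smul_sub_mem (subset_closure hmem)
        (frontier_subset_closure hfrT)
        ⟨by positivity, by rw [div_le_one hT]; exact ht.2⟩
    · have h1 : ξ + t • w = ξ + ((-t)/S) • ((ξ + S • (-w)) - ξ) := by
        have : ((-t)/S) • ((ξ + S • (-w)) - ξ) = t • w := by
          rw [show (ξ + S • (-w)) - ξ = S • (-w) by abel, smul_smul, smul_neg,
            div_mul_cancel₀ _ (ne_of_gt hS)]
          module
        rw [this]
      rw [h1]
      refine (hconv.closure).add_smul_sub_mem (subset_closure hmem)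
        (frontier_subset_closure hfrS) ⟨le_of_lt (div_pos (by linarith) hS), ?_⟩
      rw [div_le_one hS]
      linarith [ht.1]
  have hcont : ContinuousOn ψ (Set.Icc (-S) T) := by
    apply hu.continuousOn.comp (by fun_prop : Continuous fun t : ℝ => ξ + t • w).continuousOn
    intro t ht; exact hmapsto t ht
  have hψconv : StrictConvexOn ℝ (Set.Icc (-S) T) ψ := by
    apply strictConvexOn_of_deriv2_pos (convex_Icc _ _) hcont
    intro t ht
    rw [interior_Icc] at ht
    apply deriv2_line hΩ hu hpd ξ w hw
    rcases lt_trichotomy t 0 with h | h | h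
    · have hseg : ξ + t • w ∈ openSegment ℝ (ξ + S • (-w)) ξ := by
        refine ⟨(-t)/S, 1 + t/S, div_pos (by linarith) hS, ?_, by field_simp; ring, ?_⟩
        · have : -S < t := ht.1
          rw [show (1:ℝ) + t/S = (S + t)/S by field_simp]
          exact div_pos (by linarith) hS
        · rw [smul_add, smul_smul, div_mul_cancel₀ _ (ne_of_gt hS)]
          match_scalars <;> (field_simp; try ring)
      have h2 := hconv.openSegment_closure_interior_subset_interior
        (frontier_subset_closure hfrS) (by rwa [hΩ.interior_eq] : ξ ∈ interior Ω) hseg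
      rwa [hΩ.interior_eq] at h2
    · rw [h, zero_smul, add_zero]; exact hmem
    · have hseg : ξ + t • w ∈ openSegment ℝ ξ (ξ + T • w) := by
        refine ⟨1 - t/T, t/T, ?_, by positivity, by ring, ?_⟩
        · have : t < T := ht.2
          rw [show (1:ℝ) - t/T = (T - t)/T by field_simp]
          exact div_pos (by linarith) hT
        · rw [smul_add, smul_smul, div_mul_cancel₀ _ (ne_of_gt hT)]
          match_scalars <;> (field_simp; try ring)
      have h2 := hconv.openSegment_interior_closure_subset_interior
        (by rwa [hΩ.interior_eq] : ξ ∈ interior Ω) (frontier_subset_closure hfrT) hseg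
      rwa [hΩ.interior_eq] at h2
  have hSmem : -S ∈ Set.Icc (-S) T := ⟨le_refl _, by linarith⟩
  have hTmem : T ∈ Set.Icc (-S) T := ⟨by linarith, le_refl _⟩
  have hval := hψconv.convexOn.2 hSmem hTmem
    (by positivity : (0:ℝ) ≤ T/(T+S)) (by positivity : (0:ℝ) ≤ S/(T+S))
    (by field_simp)
  have hpt : (T/(T+S)) • (-S) + (S/(T+S)) • T = (0:ℝ) := by
    simp only [smul_eq_mul]
    field_simp
    ring
  rw [hpt] at hval
  have hvS : ψ (-S) = 1 := by
    show u (ξ + (-S) • w) = 1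
    rw [hptS]
    exact hbv _ hfrS
  have hvT : ψ T = 1 := hbv _ hfrT
  have hψ0 : ψ 0 = u ξ := by simp [hψdef]
  rw [hψ0, hvS, hvT] at hval
  simp only [smul_eq_mul, mul_one] at hval
  calc u ξ ≤ T/(T+S) + S/(T+S) := hval
  _ = 1 := by field_simp

end AuxLemmas

/-- Lemma 5.1 and Remark 5.2: there are constants `d > 1`, `b > 0` depending
only on `n` such that for every normalized convex domain
`B(0, n^{−3/2}) ⊂ Ω ⊂ B(0,1)` and every smooth strictly convex `u` on the
closure of `Ω`, normalized so that `inf_Ω u = 0` is attained in `Ω` and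
`u = 1` on `∂Ω`, one has `Σ (∂u/∂ξ_i)² ≤ b(d+f)²` and `|u+f| ≤ d+f` on
the closure of `Ω`, where `f` is the Legendre transform function of `u`. -/
theorem gradient_estimate_normalized (n : ℕ) (hn : 1 ≤ n) :
    ∃ d : ℝ, 1 < d ∧ ∃ b : ℝ, 0 < b ∧
      ∀ (Ω : Set (EuclideanSpace ℝ (Fin n))), IsOpen Ω → Convex ℝ Ω →
        Metric.ball (0 : EuclideanSpace ℝ (Fin n)) ((n : ℝ) ^ (-(3 : ℝ) / 2)) ⊆ Ω →
        Ω ⊆ Metric.ball (0 : EuclideanSpace ℝ (Fin n)) 1 →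
        ∀ (u : EuclideanSpace ℝ (Fin n) → ℝ),
          ContDiffOn ℝ (⊤ : ℕ∞) u (closure Ω) →
          (∀ ξ ∈ closure Ω, (hess u ξ).PosDef) →
          (∀ ξ ∈ Ω, 0 ≤ u ξ) → (∃ p ∈ Ω, u p = 0) →
          (∀ ξ ∈ frontier Ω, u ξ = 1) →
          ∀ ξ ∈ closure Ω,
            (∑ i : Fin n, (pd i u ξ) ^ 2) ≤ b * (d + legendreF u ξ) ^ 2 ∧
              |u ξ + legendreF u ξ| ≤ d + legendreF u ξ := by
  have hnpos : (0:ℝ) < n := by exact_mod_cast hn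
  set r : ℝ := (n : ℝ) ^ (-(3 : ℝ) / 2) with hrdef
  have hrpos : 0 < r := Real.rpow_pos_of_pos hnpos _
  refine ⟨2, one_lt_two, (2/r)^2, by positivity, ?_⟩
  intro Ω hΩ hconv hball hbdd u hu hpd hnn hmin hbv ξ hξ
  have humax : ∀ ζ ∈ closure Ω, u ζ ≤ 1 := fun ζ hζ =>
    max_principle hn hΩ hconv hbdd hu hpd hbv hζ
  have hunn : ∀ ζ ∈ closure Ω, 0 ≤ u ζ := by
    intro ζ hζ
    by_cases h : ζ ∈ Ω
    · exact hnn ζ h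
    · have hfr : ζ ∈ frontier Ω := by rw [frontier, hΩ.interior_eq]; exact ⟨hζ, h⟩
      rw [hbv ζ hfr]; norm_num
  have h0Ω : (0:EuclideanSpace ℝ (Fin n)) ∈ Ω := hball (Metric.mem_ball_self hrpos)
  have huξ1 : u ξ ≤ 1 := humax ξ hξ
  have huξ0 : 0 ≤ u ξ := hunn ξ hξ
  by_cases hd : DifferentiableAt ℝ u ξ
  case neg =>
    have hz : ∀ i, pd i u ξ = 0 := by
      intro i
      show fderiv ℝ u ξ (EuclideanSpace.single i 1) = 0
      rw [fderiv_zero_of_not_differentiableAt hd]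
      rfl
    have hf : legendreF u ξ = - u ξ := by
      unfold legendreF; simp [hz]
    constructor
    · rw [hf]
      simp only [hz]
      have : (0:ℝ) ≤ (2/r)^2 * (2 + -u ξ)^2 := by positivity
      simpa using this
    · rw [hf]
      rw [show u ξ + -u ξ = 0 by ring, abs_zero]
      linarith
  case pos =>
  set L := fderiv ℝ u ξ with hLdef
  have hLξ : L ξ = u ξ + legendreF u ξ := by
    rw [clm_sum L ξ]
    have hrfl : (∑ i, ξ i * L (EuclideanSpace.single i 1)) = ∑ i, ξ i * pd i u ξ := rfl
    rw [hrfl]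
    unfold legendreF
    ring
  have hf1 : -1 ≤ legendreF u ξ := by
    have ht := tangent_le hΩ hconv hu hpd hξ h0Ω hd
    rw [zero_sub, map_neg] at ht
    have hu0 : u 0 ≤ 1 := humax 0 (subset_closure h0Ω)
    have : L ξ = u ξ + legendreF u ξ := hLξ
    linarith
  constructor
  · set g : EuclideanSpace ℝ (Fin n) :=
      (EuclideanSpace.equiv (Fin n) ℝ).symm (fun i => pd i u ξ) with hgdef
    have hgi : ∀ i, g i = pd i u ξ := fun i => rfl
    by_cases hg : g = 0
    · have hz : ∀ i, pd i u ξ = 0 := fun i => by rw [← hgi i, hg]; rfl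
      simp only [hz]
      have h2f : (0:ℝ) ≤ 2 + legendreF u ξ := by linarith
      have : (0:ℝ) ≤ (2/r)^2 * (2 + legendreF u ξ)^2 := by positivity
      simpa using this
    · have hgn : 0 < ‖g‖ := norm_pos_iff.mpr hg
      have hnormsq : ‖g‖^2 = ∑ i, (pd i u ξ)^2 := by
        rw [EuclideanSpace.norm_eq, Real.sq_sqrt (by positivity)]
        exact Finset.sum_congr rfl fun i _ => by rw [Real.norm_eq_abs, sq_abs, hgi]
      set η : EuclideanSpace ℝ (Fin n) := (r/2/‖g‖) • g with hηdef
      have hηmem : η ∈ Ω := by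
        apply hball
        rw [Metric.mem_ball, dist_zero_right, hηdef, norm_smul, Real.norm_eq_abs,
          abs_of_pos (by positivity), div_mul_cancel₀ _ (ne_of_gt hgn)]
        linarith
      have ht := tangent_le hΩ hconv hu hpd hξ hηmem hd
      rw [map_sub] at ht
      have hLg : L g = ‖g‖^2 := by
        rw [clm_sum L g, hnormsq]
        refine Finset.sum_congr rfl fun i _ => ?_
        rw [hgi, show L (EuclideanSpace.single i 1) = pd i u ξ from rfl]
        ring
      have hLη : L η = (r/2) * ‖g‖ := by
        rw [hηdef, map_smul, smul_eq_mul, hLg]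
        field_simp
      have huη : u η ≤ 1 := humax η (subset_closure hηmem)
      have hgb : (r/2) * ‖g‖ ≤ 1 + legendreF u ξ := by
        have : L η = (r/2) * ‖g‖ := hLη
        linarith [hLξ, ht, huη]
      have h1f : (0:ℝ) ≤ 1 + legendreF u ξ := by linarith
      have hgle : ‖g‖ ≤ (1 + legendreF u ξ) * (2/r) := by
        rw [mul_comm] at hgb
        rw [← le_div_iff₀ (by positivity : (0:ℝ) < r/2)] at hgb
        calc ‖g‖ ≤ (1 + legendreF u ξ)/(r/2) := hgb
        _ = (1 + legendreF u ξ) * (2/r) := by field_simp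
      calc ∑ i, (pd i u ξ)^2 = ‖g‖^2 := hnormsq.symm
      _ ≤ ((1 + legendreF u ξ) * (2/r))^2 := by
          apply pow_le_pow_left₀ (norm_nonneg g) hgle
      _ = (2/r)^2 * (1 + legendreF u ξ)^2 := by ring
      _ ≤ (2/r)^2 * (2 + legendreF u ξ)^2 := by
          apply mul_le_mul_of_nonneg_left _ (by positivity)
          apply pow_le_pow_left₀ h1f (by linarith)
  · rw [abs_le]
    constructor <;> linarith
end
end

section
/- (Lemma 7.1) Let n ≥ 1, δ > 0, R' > 0, and let f be a smooth strictly convex function on an open neighborhood of the closed ball B̄_δ(0) = {x ∈ ℝⁿ : |x| ≤ δ} satisfying −R' ≤ f ≤ R' on B̄_δ(0). Then there exists a point p* ∈ B̄_δ(0) such that det(∂²f/∂x_i∂x_j)(p*) < 2^{n+1} (4R'/δ²)^n; equivalently, 1/ρ(p*) < (4R'/δ²)^{n/(n+2)} · 2^{(n+1)/(n+2)}, where ρ = (det(∂²f/∂x_i∂x_j))^{−1/(n+2)}. -/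
noncomputable section

namespace Lemma71

open Metric MeasureTheory Set Matrix
open scoped RealInnerProductSpace

variable {n : ℕ}

local notation "E" => EuclideanSpace ℝ (Fin n)

/-- The gradient map of `f`. -/
def gmap (f : E → ℝ) (x : E) : E := ∑ i, pd i f x • EuclideanSpace.single i 1

lemma gmap_apply (f : E → ℝ) (x : E) (i : Fin n) : gmap f x i = pd i f x := by
  have : gmap f x i = EuclideanSpace.proj (𝕜 := ℝ) i (gmap f x) := rfl
  rw [this, gmap, map_sum]
  simp [EuclideanSpace.single_apply]

lemma decomp (v : E) : v = ∑ i, v i • EuclideanSpace.single i (1:ℝ) := by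
  simpa using ((EuclideanSpace.basisFun (Fin n) ℝ).toBasis.sum_repr v).symm

lemma clm_apply_sum (L : E →L[ℝ] E) (v : E) :
    L v = ∑ i, v i • L (EuclideanSpace.single i 1) := by
  conv_lhs => rw [decomp v]
  simp

lemma fderiv_apply_eq (f : E → ℝ) (x v : E) :
    fderiv ℝ f x v = ∑ i, v i * pd i f x := by
  conv_lhs => rw [decomp v]
  simp [pd, mul_comm]

lemma inner_gmap (f : E → ℝ) (x v : E) : (inner ℝ (gmap f x) v : ℝ) = fderiv ℝ f x v := by
  rw [PiLp.inner_apply, fderiv_apply_eq]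
  simp [gmap_apply, mul_comm]

variable {U : Set (EuclideanSpace ℝ (Fin n))} {f : EuclideanSpace ℝ (Fin n) → ℝ}

lemma contDiffOn_pd (hUo : IsOpen U) (hf : ContDiffOn ℝ (⊤:ℕ∞) f U) (i : Fin n) :
    ContDiffOn ℝ (⊤:ℕ∞) (pd i f) U := by
  have h1 : ContDiffOn ℝ (⊤:ℕ∞) (fderiv ℝ f) U := hf.fderiv_of_isOpen hUo (by simp)
  exact (ContinuousLinearMap.apply ℝ ℝ
    (EuclideanSpace.single i (1:ℝ))).contDiff.comp_contDiffOn h1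

lemma contDiffOn_gmap (hUo : IsOpen U) (hf : ContDiffOn ℝ (⊤:ℕ∞) f U) :
    ContDiffOn ℝ (⊤:ℕ∞) (gmap f) U := by
  apply ContDiffOn.sum
  intro i _
  exact (contDiffOn_pd hUo hf i).smul contDiffOn_const

lemma hasFDerivAt_gmap (hUo : IsOpen U) (hf : ContDiffOn ℝ (⊤:ℕ∞) f U)
    {x : EuclideanSpace ℝ (Fin n)} (hx : x ∈ U) :
    HasFDerivAt (gmap f) (fderiv ℝ (gmap f) x) x :=
  ((((contDiffOn_gmap hUo hf).differentiableOn (by simp)).differentiableAt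
    (hUo.mem_nhds hx))).hasFDerivAt

lemma hasFDerivAt_f (hUo : IsOpen U) (hf : ContDiffOn ℝ (⊤:ℕ∞) f U)
    {x : EuclideanSpace ℝ (Fin n)} (hx : x ∈ U) :
    HasFDerivAt f (fderiv ℝ f x) x :=
  (((hf.differentiableOn (by simp)).differentiableAt (hUo.mem_nhds hx))).hasFDerivAt

lemma fderiv_gmap_single (hUo : IsOpen U) (hf : ContDiffOn ℝ (⊤:ℕ∞) f U)
    {x : EuclideanSpace ℝ (Fin n)} (hx : x ∈ U) (j i : Fin n) :
    (fderiv ℝ (gmap f) x (EuclideanSpace.single j 1)) i = hess f x j i := by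
  have hg := hasFDerivAt_gmap hUo hf hx
  have h := (EuclideanSpace.proj (𝕜 := ℝ) i).hasFDerivAt.comp x hg
  have h2 : (EuclideanSpace.proj (𝕜 := ℝ) i) ∘ (gmap f) = pd i f := by
    funext y; exact gmap_apply f y i
  rw [h2] at h
  have h3 := h.fderiv
  show _ = pd j (pd i f) x
  rw [pd, h3]
  rfl

lemma quad_eq (hUo : IsOpen U) (hf : ContDiffOn ℝ (⊤:ℕ∞) f U)
    {x : EuclideanSpace ℝ (Fin n)} (hx : x ∈ U) (v : EuclideanSpace ℝ (Fin n)) :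
    (inner ℝ (fderiv ℝ (gmap f) x v) v : ℝ)
      = dotProduct (fun i => v i) ((hess f x) *ᵥ (fun i => v i)) := by
  rw [clm_apply_sum (fderiv ℝ (gmap f) x) v]
  rw [sum_inner]
  have hterm : ∀ j : Fin n, (inner ℝ (v j • fderiv ℝ (gmap f) x (EuclideanSpace.single j 1)) v : ℝ)
      = v j * ∑ i, hess f x j i * v i := by
    intro j
    rw [real_inner_smul_left, PiLp.inner_apply]
    congr 1
    apply Finset.sum_congr rfl
    intro i _
    rw [fderiv_gmap_single hUo hf hx j i]
    simp [mul_comm]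
  simp only [hterm]
  rfl

lemma quad_pos (hUo : IsOpen U) (hf : ContDiffOn ℝ (⊤:ℕ∞) f U)
    (hconv : ∀ x ∈ U, (hess f x).PosDef)
    {x : EuclideanSpace ℝ (Fin n)} (hx : x ∈ U)
    {v : EuclideanSpace ℝ (Fin n)} (hv : v ≠ 0) :
    0 < (inner ℝ (fderiv ℝ (gmap f) x v) v : ℝ) := by
  rw [quad_eq hUo hf hx v]
  have hv' : (fun i => v i) ≠ (0 : Fin n → ℝ) := by
    intro h0
    apply hv
    ext i
    exact congrFun h0 i
  have := (hconv x hx).dotProduct_mulVec_pos hv'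
  simpa using this

lemma hasDerivAt_line (hUo : IsOpen U) (hf : ContDiffOn ℝ (⊤:ℕ∞) f U)
    (x v : EuclideanSpace ℝ (Fin n)) {t : ℝ} (hx : x + t • v ∈ U) :
    HasDerivAt (fun s : ℝ => (inner ℝ (gmap f (x + s • v)) v : ℝ))
      (inner ℝ (fderiv ℝ (gmap f) (x + t • v) v) v : ℝ) t := by
  have hc : HasDerivAt (fun s : ℝ => x + s • v) v t := by
    simpa using ((hasDerivAt_id t).smul_const v).const_add x
  have h1 : HasDerivAt (fun s : ℝ => gmap f (x + s • v))
      (fderiv ℝ (gmap f) (x + t • v) v) t := by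
    exact (hasFDerivAt_gmap hUo hf hx).comp_hasDerivAt t hc
  have h2 := ((innerSL ℝ).flip v).hasFDerivAt.comp_hasDerivAt t h1
  have h3 : (⇑((innerSL ℝ).flip v)) ∘ (fun s : ℝ => gmap f (x + s • v))
      = fun s : ℝ => (inner ℝ (gmap f (x + s • v)) v : ℝ) := rfl
  rw [h3] at h2
  exact h2

lemma strictMonoOn_line (hUo : IsOpen U) (hf : ContDiffOn ℝ (⊤:ℕ∞) f U)
    (hconv : ∀ x ∈ U, (hess f x).PosDef)
    (x : EuclideanSpace ℝ (Fin n)) {v : EuclideanSpace ℝ (Fin n)} (hv : v ≠ 0)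
    {a b : ℝ} (hseg : ∀ t ∈ Icc a b, x + t • v ∈ U) :
    StrictMonoOn (fun t : ℝ => (inner ℝ (gmap f (x + t • v)) v : ℝ)) (Icc a b) := by
  apply strictMonoOn_of_deriv_pos (convex_Icc a b)
  · intro t ht
    exact (hasDerivAt_line hUo hf x v (hseg t ht)).continuousAt.continuousWithinAt
  · intro t ht
    rw [interior_Icc] at ht
    have h := hasDerivAt_line hUo hf x v (hseg t (Ioo_subset_Icc_self ht))
    rw [h.deriv]
    exact quad_pos hUo hf hconv (hseg t (Ioo_subset_Icc_self ht)) hv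

lemma injOn_gmap (hUo : IsOpen U) (hf : ContDiffOn ℝ (⊤:ℕ∞) f U)
    (hconv : ∀ x ∈ U, (hess f x).PosDef) {r : ℝ}
    (hrU : ball (0 : EuclideanSpace ℝ (Fin n)) r ⊆ U) :
    InjOn (gmap f) (ball (0 : EuclideanSpace ℝ (Fin n)) r) := by
  intro x hx y hy hxy
  by_contra hne
  have hv : y - x ≠ 0 := sub_ne_zero_of_ne (Ne.symm hne)
  have hseg : ∀ t ∈ Icc (0:ℝ) 1, x + t • (y - x) ∈ U := by
    intro t ht
    exact hrU ((convex_ball (0 : EuclideanSpace ℝ (Fin n)) r).add_smul_sub_mem hx hy ht)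
  have hmono := strictMonoOn_line hUo hf hconv x hv hseg
  have h01 := hmono (left_mem_Icc.2 zero_le_one) (right_mem_Icc.2 zero_le_one) zero_lt_one
  simp only [zero_smul, add_zero, one_smul, add_sub_cancel] at h01
  rw [hxy] at h01
  exact lt_irrefl _ h01

lemma det_fderiv_gmap (hUo : IsOpen U) (hf : ContDiffOn ℝ (⊤:ℕ∞) f U)
    {x : EuclideanSpace ℝ (Fin n)} (hx : x ∈ U) :
    (fderiv ℝ (gmap f) x).det = (hess f x).det := by
  set b := (EuclideanSpace.basisFun (Fin n) ℝ).toBasis with hb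
  have h1 : (fderiv ℝ (gmap f) x).det
      = LinearMap.det ((fderiv ℝ (gmap f) x) : EuclideanSpace ℝ (Fin n) →ₗ[ℝ]
          EuclideanSpace ℝ (Fin n)) := rfl
  rw [h1, ← LinearMap.det_toMatrix b]
  have h2 : LinearMap.toMatrix b b ((fderiv ℝ (gmap f) x) : EuclideanSpace ℝ (Fin n) →ₗ[ℝ]
      EuclideanSpace ℝ (Fin n)) = (hess f x).transpose := by
    ext i j
    rw [LinearMap.toMatrix_apply]
    rw [hb]
    rw [OrthonormalBasis.coe_toBasis_repr_apply]
    rw [EuclideanSpace.basisFun_repr]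
    simp only [OrthonormalBasis.coe_toBasis, EuclideanSpace.basisFun_apply]
    rw [ContinuousLinearMap.coe_coe]
    rw [fderiv_gmap_single hUo hf hx j i]
    rfl
  rw [h2, Matrix.det_transpose]

lemma gmap_norm_le (hUo : IsOpen U) (hf : ContDiffOn ℝ (⊤:ℕ∞) f U)
    (hconv : ∀ x ∈ U, (hess f x).PosDef) {δ R' : ℝ} (hδ : 0 < δ) (hR : 0 < R')
    (hball : Metric.closedBall (0 : EuclideanSpace ℝ (Fin n)) δ ⊆ U)
    (hbound : ∀ x ∈ Metric.closedBall (0 : EuclideanSpace ℝ (Fin n)) δ,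
      -R' ≤ f x ∧ f x ≤ R')
    {x : EuclideanSpace ℝ (Fin n)} (hx : x ∈ ball (0 : EuclideanSpace ℝ (Fin n)) (δ/2)) :
    ‖gmap f x‖ ≤ 4 * R' / δ := by
  rcases eq_or_ne (gmap f x) 0 with h0 | h0
  · rw [h0, norm_zero]; positivity
  set u : EuclideanSpace ℝ (Fin n) := ‖gmap f x‖⁻¹ • gmap f x with hu
  have hnu : ‖u‖ = 1 := norm_smul_inv_norm h0
  have hxn : ‖x‖ < δ / 2 := by simpa [mem_ball, dist_eq_norm] using hx
  have hseg : ∀ t ∈ Icc (0:ℝ) (δ/2),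
      x + t • u ∈ Metric.closedBall (0 : EuclideanSpace ℝ (Fin n)) δ := by
    intro t ht
    rw [mem_closedBall, dist_eq_norm, sub_zero]
    calc ‖x + t • u‖ ≤ ‖x‖ + ‖t • u‖ := norm_add_le _ _
      _ ≤ δ/2 + δ/2 := by
          rw [norm_smul, hnu, mul_one, Real.norm_eq_abs, abs_of_nonneg ht.1]
          exact add_le_add hxn.le ht.2
      _ = δ := by ring
  have hsegU : ∀ t ∈ Icc (0:ℝ) (δ/2), x + t • u ∈ U := fun t ht => hball (hseg t ht)
  have hu0 : u ≠ 0 := by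
    rw [hu]
    exact smul_ne_zero (inv_ne_zero (norm_ne_zero_iff.2 h0)) h0
  -- derivative of φ(t) = f (x + t • u)
  have hφ : ∀ t ∈ Icc (0:ℝ) (δ/2), HasDerivAt (fun s : ℝ => f (x + s • u))
      (inner ℝ (gmap f (x + t • u)) u : ℝ) t := by
    intro t ht
    have hc : HasDerivAt (fun s : ℝ => x + s • u) u t := by
      simpa using ((hasDerivAt_id t).smul_const u).const_add x
    have h1 := (hasFDerivAt_f hUo hf (hsegU t ht)).comp_hasDerivAt t hc
    rw [inner_gmap]
    exact h1
  have hmvt := exists_hasDerivAt_eq_slope (fun s : ℝ => f (x + s • u))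
    (fun t => (inner ℝ (gmap f (x + t • u)) u : ℝ)) (by linarith : (0:ℝ) < δ/2)
    (fun t ht => (hφ t ht).continuousAt.continuousWithinAt)
    (fun t ht => hφ t (Ioo_subset_Icc_self ht))
  obtain ⟨c, hc, hceq⟩ := hmvt
  have hmono := strictMonoOn_line hUo hf hconv x hu0 hsegU
  have h0c : (inner ℝ (gmap f (x + (0:ℝ) • u)) u : ℝ) ≤ (inner ℝ (gmap f (x + c • u)) u : ℝ) :=
    hmono.monotoneOn (left_mem_Icc.2 (by linarith)) (Ioo_subset_Icc_self hc) hc.1.le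
  have hinner : (inner ℝ (gmap f (x + (0:ℝ) • u)) u : ℝ) = ‖gmap f x‖ := by
    simp only [zero_smul, add_zero, hu]
    rw [real_inner_smul_right, real_inner_self_eq_norm_sq]
    rw [inv_mul_eq_div, sq]
    field_simp
  have hfb1 := hbound _ (hseg (δ/2) (right_mem_Icc.2 (by linarith)))
  have hfb0 := hbound _ (hseg 0 (left_mem_Icc.2 (by linarith)))
  have hslope : (f (x + (δ/2) • u) - f (x + (0:ℝ) • u)) / (δ/2 - 0) ≤ 4 * R' / δ := by
    rw [sub_zero]
    rw [div_le_div_iff₀ (by linarith) hδ]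
    nlinarith [hfb1.1, hfb1.2, hfb0.1, hfb0.2]
  calc ‖gmap f x‖ = (inner ℝ (gmap f (x + (0:ℝ) • u)) u : ℝ) := hinner.symm
    _ ≤ (inner ℝ (gmap f (x + c • u)) u : ℝ) := h0c
    _ = (f (x + (δ/2) • u) - f (x + (0:ℝ) • u)) / (δ/2 - 0) := hceq
    _ ≤ 4 * R' / δ := hslope

lemma key (hn : 1 ≤ n) {δ R' : ℝ} (hδ : 0 < δ) (hR : 0 < R')
    (hUo : IsOpen U)
    (hball : Metric.closedBall (0 : EuclideanSpace ℝ (Fin n)) δ ⊆ U)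
    (hf : ContDiffOn ℝ (⊤:ℕ∞) f U)
    (hconv : ∀ x ∈ U, (hess f x).PosDef)
    (hbound : ∀ x ∈ Metric.closedBall (0 : EuclideanSpace ℝ (Fin n)) δ,
      -R' ≤ f x ∧ f x ≤ R') :
    ∃ p ∈ Metric.closedBall (0 : EuclideanSpace ℝ (Fin n)) δ,
      (hess f p).det < 2 ^ (n + 1) * (4 * R' / δ ^ 2) ^ n := by
  haveI : Nonempty (Fin n) := ⟨⟨0, hn⟩⟩
  by_contra hcon
  push_neg at hcon
  set M : ℝ := 2 ^ (n + 1) * (4 * R' / δ ^ 2) ^ n with hM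
  have hMpos : 0 < M := by positivity
  set s : Set (EuclideanSpace ℝ (Fin n)) := ball (0 : EuclideanSpace ℝ (Fin n)) (δ/2) with hs
  have hsub : s ⊆ Metric.closedBall (0 : EuclideanSpace ℝ (Fin n)) δ :=
    (ball_subset_ball (by linarith)).trans ball_subset_closedBall
  have hsU : s ⊆ U := hsub.trans hball
  have hder : ∀ x ∈ s, HasFDerivWithinAt (gmap f) (fderiv ℝ (gmap f) x) s x :=
    fun x hx => (hasFDerivAt_gmap hUo hf (hsU hx)).hasFDerivWithinAt
  have hinj : InjOn (gmap f) s := injOn_gmap hUo hf hconv (hsU)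
  have himg : gmap f '' s ⊆ Metric.closedBall (0 : EuclideanSpace ℝ (Fin n)) (4 * R' / δ) := by
    rintro - ⟨x, hx, rfl⟩
    rw [mem_closedBall, dist_eq_norm, sub_zero]
    exact gmap_norm_le hUo hf hconv hδ hR hball hbound hx
  have hcov := lintegral_abs_det_fderiv_le_addHaar_image volume measurableSet_ball hder hinj
  have hlow : ENNReal.ofReal M * volume s
      ≤ ∫⁻ x in s, ENNReal.ofReal |(fderiv ℝ (gmap f) x).det| := by
    rw [← setLIntegral_const]
    apply setLIntegral_mono' measurableSet_ball
    intro x hx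
    apply ENNReal.ofReal_le_ofReal
    rw [det_fderiv_gmap hUo hf (hsU hx)]
    rw [abs_of_pos (hconv x (hsU hx)).det_pos]
    exact hcon x (hsub hx)
  have hfinal : ENNReal.ofReal M * volume s
      ≤ volume (Metric.closedBall (0 : EuclideanSpace ℝ (Fin n)) (4 * R' / δ)) :=
    le_trans hlow (le_trans hcov (measure_mono himg))
  rw [hs, EuclideanSpace.volume_ball, EuclideanSpace.volume_closedBall] at hfinal
  rw [Fintype.card_fin] at hfinal
  set C : ENNReal := ENNReal.ofReal (√Real.pi ^ n / Real.Gamma (↑n / 2 + 1)) with hC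
  have hC0 : C ≠ 0 := by
    rw [hC]
    simp only [ne_eq, ENNReal.ofReal_eq_zero, not_le]
    have h1 : (0:ℝ) < √Real.pi ^ n := by
      apply pow_pos
      exact Real.sqrt_pos.2 Real.pi_pos
    have h2 : (0:ℝ) < Real.Gamma (↑n / 2 + 1) := Real.Gamma_pos_of_pos (by positivity)
    positivity
  have hCt : C ≠ ⊤ := ENNReal.ofReal_ne_top
  have hfin2 : ENNReal.ofReal M * ENNReal.ofReal (δ/2) ^ n
      ≤ ENNReal.ofReal (4 * R' / δ) ^ n := by
    rw [← ENNReal.mul_le_mul_iff_left hC0 hCt]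
    calc ENNReal.ofReal M * ENNReal.ofReal (δ/2) ^ n * C
        = ENNReal.ofReal M * (ENNReal.ofReal (δ/2) ^ n * C) := by ring
      _ ≤ ENNReal.ofReal (4 * R' / δ) ^ n * C := hfinal
  have hreal : M * (δ/2) ^ n ≤ (4 * R' / δ) ^ n := by
    rw [← ENNReal.ofReal_pow (by linarith), ← ENNReal.ofReal_pow (by positivity),
      ← ENNReal.ofReal_mul hMpos.le] at hfin2
    exact (ENNReal.ofReal_le_ofReal_iff (by positivity)).1 hfin2
  have hb1 : (4 * R' / δ ^ 2) * (δ/2) = 2 * R' / δ := by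
    field_simp
    ring
  have hMeq : M * (δ/2) ^ n = 2 * (4 * R' / δ) ^ n := by
    rw [hM, pow_succ]
    calc 2 ^ n * 2 * (4 * R' / δ ^ 2) ^ n * (δ / 2) ^ n
        = 2 * ((2 * ((4 * R' / δ ^ 2) * (δ/2))) ^ n) := by
          rw [mul_pow, mul_pow]; ring
      _ = 2 * (4 * R' / δ) ^ n := by
          rw [hb1]
          congr 2
          field_simp
          ring
  rw [hMeq] at hreal
  have hpos : (0:ℝ) < (4 * R' / δ) ^ n := by positivity
  linarith

end Lemma71

/-- Lemma 7.1: a smooth strictly convex function with `−R' ≤ f ≤ R'` on the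
closed Euclidean ball of radius `δ` has a point `p*` in that ball where
`det D²f(p*) < 2^{n+1}(4R'/δ²)^n`, i.e. `1/ρ(p*) < (4R'/δ²)^{n/(n+2)} 2^{(n+1)/(n+2)}`
for `ρ = (det D²f)^{−1/(n+2)}`. -/
theorem lemma_7_1 (n : ℕ) (hn : 1 ≤ n) (δ R' : ℝ) (hδ : 0 < δ) (hR : 0 < R')
    (U : Set (EuclideanSpace ℝ (Fin n))) (hUo : IsOpen U)
    (hball : Metric.closedBall (0 : EuclideanSpace ℝ (Fin n)) δ ⊆ U)
    (f : EuclideanSpace ℝ (Fin n) → ℝ) (hf : ContDiffOn ℝ (⊤ : ℕ∞) f U)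
    (hconv : ∀ x ∈ U, (hess f x).PosDef)
    (hbound : ∀ x ∈ Metric.closedBall (0 : EuclideanSpace ℝ (Fin n)) δ,
      -R' ≤ f x ∧ f x ≤ R') :
    ∃ p ∈ Metric.closedBall (0 : EuclideanSpace ℝ (Fin n)) δ,
      (hess f p).det < 2 ^ (n + 1) * (4 * R' / δ ^ 2) ^ n ∧
        1 / ((hess f p).det ^ (-(1 : ℝ) / ((n : ℝ) + 2))) <
          (4 * R' / δ ^ 2) ^ ((n : ℝ) / ((n : ℝ) + 2)) *
            2 ^ (((n : ℝ) + 1) / ((n : ℝ) + 2)) := by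
  obtain ⟨p, hp, hdet⟩ := Lemma71.key hn hδ hR hUo hball hf hconv hbound
  refine ⟨p, hp, hdet, ?_⟩
  set d : ℝ := (hess f p).det with hd
  have hdpos : 0 < d := (hconv p (hball hp)).det_pos
  set A : ℝ := 4 * R' / δ ^ 2 with hA
  have hApos : 0 < A := by positivity
  have he : (0:ℝ) < 1 / ((n:ℝ) + 2) := by positivity
  have hlhs : 1 / (d ^ (-(1 : ℝ) / ((n : ℝ) + 2))) = d ^ ((1:ℝ) / ((n : ℝ) + 2)) := by
    rw [neg_div, Real.rpow_neg hdpos.le, one_div, inv_inv]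
  rw [hlhs]
  have hrhs : A ^ ((n : ℝ) / ((n : ℝ) + 2)) * 2 ^ (((n : ℝ) + 1) / ((n : ℝ) + 2))
      = (2 ^ (n + 1) * A ^ n) ^ ((1:ℝ) / ((n : ℝ) + 2)) := by
    rw [Real.mul_rpow (by positivity) (by positivity)]
    rw [← Real.rpow_natCast A n, ← Real.rpow_natCast (2:ℝ) (n+1)]
    rw [← Real.rpow_mul hApos.le, ← Real.rpow_mul (by norm_num : (0:ℝ) ≤ 2)]
    push_cast
    rw [mul_one_div, mul_one_div]
    ring
  rw [hrhs]
  exact Real.rpow_lt_rpow hdpos.le hdet he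
end
end
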